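/- For the shape θ given by rows (in skew form) with boxes at positions {(1,4),(2,4),(3,3),(3,4),(4,1),(4,2),(4,3),(4,4)} and the filling s with s_{1,4}=α₂, s_{2,4}=α₁, s_{3,3}=c₀, s_{3,4}=c₁, s_{4,1}=β₂, s_{4,2}=β₁, s_{4,3}=c_{−1}, s_{4,4}=c₀ (all in the convergence domain), the skew Schur multiple zeta value satisfies the 2×2 determinant identity ζ_θ(s) = ζ_{θ₁₁}(s₁₁)·ζ_{(1)}(c₀) − ζ_{θ₁₂}(s₁₂)·ζ_{θ₂₁}(s₂₁), where θ₁₁ is θ with the box (4,4) removed, θ₁₂ = {(1,2),(2,2),(3,1),(3,2)} with entries (α₂; α₁; c₀,c₁), and θ₂₁ = {(1,3),(2,1),(2,2),(2,3)} with entries (c₀; β₂,β₁,c_{−1}), products being harmonic products. -/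

import Mathlib

open scoped BigOperators

/-- Boxes of Young-type diagrams, as pairs of natural numbers (row, column). -/
abbrev Box : Type := ℕ × ℕ

/-- Semistandardness of a filling `t` of the (generalized, possibly skew or laced)
shape `θ`: positive entries, weakly increasing along rows, strictly increasing
down columns, normalized to `1` outside the shape. -/
def IsSSYT (θ : Finset Box) (t : Box → ℕ) : Prop :=
  (∀ x ∈ θ, 0 < t x) ∧
  (∀ i j : ℕ, (i, j) ∈ θ → (i, j + 1) ∈ θ → t (i, j) ≤ t (i, j + 1)) ∧
  (∀ i j : ℕ, (i, j) ∈ θ → (i + 1, j) ∈ θ → t (i, j) < t (i + 1, j)) ∧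
  (∀ x, x ∉ θ → t x = 1)

/-- The type of semistandard Young tableaux of shape `θ`. -/
def SSYT (θ : Finset Box) : Type := {t : Box → ℕ // IsSSYT θ t}

/-- The weight `w(s, t) = ∏_{x ∈ θ} t(x)^{-s(x)}` of a filling `t` with complex
exponents `s`. -/
noncomputable def wt (θ : Finset Box) (s : Box → ℂ) (t : Box → ℕ) : ℂ :=
  ∏ x ∈ θ, (t x : ℂ) ^ (-(s x))

/-- The Schur multiple zeta value attached to a shape `θ` and a complex filling `s`. -/
noncomputable def zetaS (θ : Finset Box) (s : Box → ℂ) : ℂ :=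
  ∑' T : SSYT θ, wt θ s T.1

/-- The corners of a shape: boxes having no neighbour to the right nor below. -/
def corners (θ : Finset Box) : Finset Box :=
  θ.filter fun x => (x.1, x.2 + 1) ∉ θ ∧ (x.1 + 1, x.2) ∉ θ

/-- The Young diagram (0-indexed) with Frobenius notation `(p₁,…,p_N | q₁,…,q_N)`:
for each `k < N` the diagonal box `(k,k)`, the arm `(k, k+1), …, (k, k + p k)`
and the leg `(k+1, k), …, (k + q k, k)`. -/
def frobShape (N : ℕ) (p q : ℕ → ℕ) : Finset Box :=
  (Finset.range N).biUnion fun k =>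
    ((Finset.range (p k + 1)).image fun a => (k, k + a)) ∪
    ((Finset.range (q k)).image fun b => (k + 1 + b, k))

/-- The hook shape `(a+1, 1^b)`. -/
def hookShape (a b : ℕ) : Finset Box := frobShape 1 (fun _ => a) (fun _ => b)

/-- Valid Frobenius data: the arm and leg lengths are strictly decreasing. -/
def FrobData (N : ℕ) (p q : ℕ → ℕ) : Prop :=
  ∀ k : ℕ, k + 1 < N → p (k + 1) < p k ∧ q (k + 1) < q k

/-- The arm region `D(p)` of `λ = (p | q)`. -/
def Dp (N : ℕ) (p : ℕ → ℕ) : Finset Box :=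
  (Finset.range N).biUnion fun k => (Finset.range (p k)).image fun a => (k, k + 1 + a)

/-- The leg-plus-diagonal region `D(q) ∪ B` of `λ = (p | q)`. -/
def DqB (N : ℕ) (q : ℕ → ℕ) : Finset Box :=
  (Finset.range N).biUnion fun k => (Finset.range (q k + 1)).image fun b => (k + b, k)

/-- The semistandard conditions restricted to a region `R`. -/
def SSYTOn (R : Finset Box) (t : Box → ℕ) : Prop :=
  (∀ i j : ℕ, (i, j) ∈ R → (i, j + 1) ∈ R → t (i, j) ≤ t (i, j + 1)) ∧
  (∀ i j : ℕ, (i, j) ∈ R → (i + 1, j) ∈ R → t (i, j) < t (i + 1, j))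

/-- Positive entries plus semistandard conditions on a region. -/
def IsSSYTOn (θ : Finset Box) (t : Box → ℕ) : Prop :=
  (∀ x ∈ θ, 0 < t x) ∧ SSYTOn θ t

/-- A `σ`-tableau of shape `λ = (p | q)` (Frobenius notation, `0`-indexed):
(I) rows weakly increase within the arm region `D(p)`,
(II) columns strictly increase within the leg-plus-diagonal region `D(q) ∪ B`,
(III) `t (σ i, σ i) ≤ t (i, i+1)` whenever the arm of row `i` is nonempty. -/
structure IsSigmaTab (N : ℕ) (p q : ℕ → ℕ) (σ : Equiv.Perm (Fin N)) (t : Box → ℕ) : Prop where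
  pos : ∀ x ∈ frobShape N p q, 0 < t x
  rowArm : ∀ k : ℕ, k < N → ∀ j : ℕ, k < j → j < k + p k → t (k, j) ≤ t (k, j + 1)
  colLeg : ∀ k : ℕ, k < N → ∀ i : ℕ, k ≤ i → i < k + q k → t (i, k) < t (i + 1, k)
  diagCond : ∀ i : Fin N, 0 < p i.1 → t ((σ i).1, (σ i).1) ≤ t (i.1, i.1 + 1)

/-- The hook tableau `T_k(σ)`: top row `(t(σk,σk), t(k,k+1), …, t(k,k+p_k))`,
first column continuing with `t(σk+1, σk), …, t(σk + q_{σk}, σk)`;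
value `1` outside the hook shape. -/
def hookOf {N : ℕ} (p q : ℕ → ℕ) (σ : Equiv.Perm (Fin N)) (t : Box → ℕ) (k : Fin N) :
    Box → ℕ := fun x =>
  if x.1 = 0 ∧ x.2 ≤ p k.1 then
    if x.2 = 0 then t ((σ k).1, (σ k).1) else t (k.1, k.1 + x.2)
  else if x.2 = 0 ∧ 0 < x.1 ∧ x.1 ≤ q (σ k).1 then t ((σ k).1 + x.1, (σ k).1)
  else 1

/-- A failure of the semistandard condition at the north-east boundary of the
main diagonal, at the box `(k, k+1)`. -/
def BoundaryFail (N : ℕ) (p q : ℕ → ℕ) (t : Box → ℕ) (k : ℕ) : Prop :=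
  k < N ∧ 0 < p k ∧
    (t (k, k + 1) < t (k, k) ∨
      ((k + 1, k + 1) ∈ frobShape N p q ∧ t (k + 1, k + 1) ≤ t (k, k + 1)))

/-- A bound on the coordinates of a shape. -/
def bnd (θ : Finset Box) : ℕ := θ.sup fun x => max x.1 x.2

/-- The transpose of a shape with respect to the anti-diagonal. -/
def adt (θ : Finset Box) : Finset Box := θ.image fun x => (bnd θ - x.2, bnd θ - x.1)

/-- The anti-diagonal transpose of a filling of `θ`. -/
def adtFill {α : Type*} (θ : Finset Box) (γ : Box → α) : Box → α :=
  fun x => γ (bnd θ - x.2, bnd θ - x.1)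

/-- Skew shapes: set differences of Young diagrams of partitions `μ ⊆ λ`. -/
def IsSkewShape (θ : Finset Box) : Prop :=
  ∃ lam mu : ℕ → ℕ, Antitone lam ∧ Antitone mu ∧ (∀ i, mu i ≤ lam i) ∧
    ∀ x : Box, x ∈ θ ↔ mu x.1 ≤ x.2 ∧ x.2 < lam x.1

/-- Shapes of ordinary (non-skew) Young diagrams: closed to the left and upwards. -/
def IsYoungShape (θ : Finset Box) : Prop :=
  (∀ i j : ℕ, (i + 1, j) ∈ θ → (i, j) ∈ θ) ∧ (∀ i j : ℕ, (i, j + 1) ∈ θ → (i, j) ∈ θ)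

/-- The quasi-symmetric Schur function `S_θ(γ)` as a formal power series in the
variables `t₁, t₂, …` (indexed by `ℕ`): the coefficient of a monomial `d` is
the number of semistandard tableaux `T` of shape `θ` with
`∏_{x ∈ θ} t_{T x}^{γ x} = t^d`. -/
noncomputable def schurQ (θ : Finset Box) (γ : Box → ℕ) : MvPowerSeries ℕ ℚ :=
  fun d => (Nat.card {T : SSYT θ // (∑ x ∈ θ, Finsupp.single (T.1 x) (γ x)) = d} : ℚ)

/-- The monomial quasi-symmetric function `M_I = ∑_{0 < m₁ < … < m_k} ∏ t_{mᵢ}^{Iᵢ}`. -/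
noncomputable def monomialQ (I : List ℕ) : MvPowerSeries ℕ ℚ :=
  fun d => (Nat.card {m : Fin I.length → ℕ // StrictMono m ∧ (∀ i, 0 < m i) ∧
    (∑ i, Finsupp.single (m i) (I.get i)) = d} : ℚ)

/-- The coarsening of a composition determined by a set `B` of internal break
points: adjacent parts are merged unless separated by a break in `B`. -/
def coarsenFrom (B : Finset ℕ) : ℕ → List ℕ → List ℕ
  | _, [] => []
  | _, [a] => [a]
  | n, a :: b :: rest =>
      if n ∈ B then a :: coarsenFrom B (n + 1) (b :: rest)
      else coarsenFrom B (n + 1) ((a + b) :: rest)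

/-- Translation of a shape by `(u, v)`. -/
def shiftShape (u v : ℕ) (θ : Finset Box) : Finset Box := θ.image fun x => (u + x.1, v + x.2)

/-- The laced hook shape `[λ_* | (p i + 1, 1^{q j}) | λ^*]`, with the middle hook placed
at offset `(u, v)`, the south-west wing `A` attached when `j = 0` and the north-east
wing `C` attached when `i = 0`. -/
def lacedHookShape (A C : Finset Box) (u v : ℕ) (p q : ℕ → ℕ) (i j : ℕ) : Finset Box :=
  (if j = 0 then A else ∅) ∪ shiftShape u v (hookShape (p i) (q j)) ∪ (if i = 0 then C else ∅)

/-- The laced hook tableau `T̃_k(σ)`: the wing entries of `tt` together with the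
hook tableau `T_k(σ)` of the middle part (placed at offset `(u, v)`). -/
def lacedHookTab {N : ℕ} (A C : Finset Box) (u v : ℕ) (p q : ℕ → ℕ)
    (σ : Equiv.Perm (Fin N)) (tt : Box → ℕ) (k : Fin N) : Box → ℕ := fun x =>
  if ((σ k).1 = 0 ∧ x ∈ A) ∨ (k.1 = 0 ∧ x ∈ C) then tt x
  else if u ≤ x.1 ∧ v ≤ x.2 then
    hookOf p q σ (fun y => tt (u + y.1, v + y.2)) k (x.1 - u, x.2 - v)
  else 1
namespace GA
set_option maxHeartbeats 1000000

/-! ### Analytic infrastructure -/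

noncomputable def cp (n : ℕ) (s : ℂ) : ℂ := (n : ℂ) ^ (-s)

lemma cp_norm {n : ℕ} (hn : 0 < n) (s : ℂ) : ‖cp n s‖ = (n : ℝ) ^ (-s.re) := by
  rw [cp, Complex.norm_natCast_cpow_of_pos hn]
  simp

noncomputable def g (ε : ℝ) (n : ℕ) : ℝ := (n : ℝ) ^ (-(1 + ε))

lemma g_nonneg (ε : ℝ) (n : ℕ) : 0 ≤ g ε n := Real.rpow_nonneg (Nat.cast_nonneg n) _

lemma g_summable {ε : ℝ} (hε : 0 < ε) : Summable (g ε) :=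
  Real.summable_nat_rpow.mpr (by linarith)

lemma bound2 {m : ℕ} (hm : 0 < m) {σ τ : ℝ} (h : τ ≤ σ) :
    (m : ℝ) ^ (-σ) ≤ (m : ℝ) ^ (-τ) :=
  Real.rpow_le_rpow_of_exponent_le (by exact_mod_cast hm) (by linarith)

lemma bound1 {m M : ℕ} (hm : 0 < m) (hM : m ≤ M) {σ ε : ℝ} (hσ : 1 ≤ σ) (hε : 0 ≤ ε) :
    (m : ℝ) ^ (-σ) ≤ (M : ℝ) ^ ε * g ε m := by
  have h1 : (m : ℝ) ^ (-σ) ≤ (m : ℝ) ^ (-(1:ℝ)) := bound2 hm (by linarith)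
  have h2 : (m : ℝ) ^ (-(1:ℝ)) = (m : ℝ) ^ ε * g ε m := by
    rw [g, ← Real.rpow_add (by exact_mod_cast hm)]; norm_num
  have h3 : (m : ℝ) ^ ε ≤ (M : ℝ) ^ ε :=
    Real.rpow_le_rpow (Nat.cast_nonneg m) (by exact_mod_cast hM) hε
  calc (m:ℝ)^(-σ) ≤ (m:ℝ)^ε * g ε m := h2 ▸ h1
    _ ≤ (M:ℝ)^ε * g ε m := mul_le_mul_of_nonneg_right h3 (g_nonneg ε m)

/-! ### Index types and conditions -/

abbrev T7 : Type := ℕ×ℕ×ℕ×ℕ×ℕ×ℕ×ℕ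
abbrev T8 : Type := T7 × ℕ
abbrev T4 : Type := ℕ×ℕ×ℕ×ℕ

-- coordinates of v : T7 : (a2, a1, x, y, b2, b1, z); of v : T8 : (v7, w).
abbrev C7 (v : T7) : Prop :=
  0 < v.1 ∧ v.1 < v.2.1 ∧ v.2.1 < v.2.2.2.1 ∧ 0 < v.2.2.1 ∧ v.2.2.1 ≤ v.2.2.2.1 ∧
  v.2.2.1 < v.2.2.2.2.2.2 ∧ 0 < v.2.2.2.2.1 ∧ v.2.2.2.2.1 ≤ v.2.2.2.2.2.1 ∧
  v.2.2.2.2.2.1 ≤ v.2.2.2.2.2.2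

abbrev Cfull (v : T8) : Prop := C7 v.1 ∧ 0 < v.2

abbrev C8 (v : T8) : Prop := C7 v.1 ∧ v.1.2.2.2.2.2.2 ≤ v.2 ∧ v.1.2.2.2.1 < v.2

abbrev Cbad (v : T8) : Prop :=
  C7 v.1 ∧ 0 < v.2 ∧ (v.2 < v.1.2.2.2.2.2.2 ∨ v.2 ≤ v.1.2.2.2.1)

abbrev Cbadle (v : T8) : Prop := Cbad v ∧ v.1.2.2.2.2.2.2 ≤ v.1.2.2.2.1 + 1
abbrev Cbadgt (v : T8) : Prop := Cbad v ∧ v.1.2.2.2.1 + 1 < v.1.2.2.2.2.2.2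

abbrev Cpair (v : T8) : Prop :=
  0 < v.1.1 ∧ v.1.1 < v.1.2.1 ∧ v.1.2.1 < v.1.2.2.2.1 ∧ 0 < v.1.2.2.1 ∧
  v.1.2.2.1 ≤ v.1.2.2.2.1 ∧ 0 < v.1.2.2.2.2.1 ∧ v.1.2.2.2.2.1 ≤ v.1.2.2.2.2.2.1 ∧
  v.1.2.2.2.2.2.1 ≤ v.1.2.2.2.2.2.2 ∧ 0 < v.2 ∧ v.2 < v.1.2.2.2.2.2.2

abbrev Cpairle (v : T8) : Prop := Cpair v ∧ v.1.2.2.2.2.2.2 ≤ v.1.2.2.2.1 + 1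
abbrev Cpairgt (v : T8) : Prop := Cpair v ∧ v.1.2.2.2.1 + 1 < v.1.2.2.2.2.2.2

-- (a2, a1, x, y)
abbrev C12 (v : T4) : Prop :=
  0 < v.1 ∧ v.1 < v.2.1 ∧ v.2.1 < v.2.2.2 ∧ 0 < v.2.2.1 ∧ v.2.2.1 ≤ v.2.2.2

-- (w, b2, b1, z)
abbrev C21 (v : T4) : Prop :=
  0 < v.1 ∧ v.1 < v.2.2.2 ∧ 0 < v.2.1 ∧ v.2.1 ≤ v.2.2.1 ∧ v.2.2.1 ≤ v.2.2.2

section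
variable (α₂ α₁ c₁ c₀ cm β₁ β₂ : ℂ) (ε : ℝ)

/-! ### Weights and comparison bounds -/

noncomputable def W7 (v : T7) : ℂ :=
  cp v.1 α₂ * (cp v.2.1 α₁ * (cp v.2.2.1 c₀ * (cp v.2.2.2.1 c₁ *
    (cp v.2.2.2.2.1 β₂ * (cp v.2.2.2.2.2.1 β₁ * cp v.2.2.2.2.2.2 cm)))))

noncomputable def W8 (v : T8) : ℂ := W7 α₂ α₁ c₁ c₀ cm β₁ β₂ v.1 * cp v.2 c₀

noncomputable def W12 (v : T4) : ℂ :=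
  cp v.1 α₂ * (cp v.2.1 α₁ * (cp v.2.2.1 c₀ * cp v.2.2.2 c₁))

noncomputable def W21 (v : T4) : ℂ :=
  cp v.1 c₀ * (cp v.2.1 β₂ * (cp v.2.2.1 β₁ * cp v.2.2.2 cm))

noncomputable def G7 (v : T7) : ℝ :=
  g ε v.1 * (g ε v.2.1 * (g ε v.2.2.1 * (g ε v.2.2.2.1 *
    (g ε v.2.2.2.2.1 * (g ε v.2.2.2.2.2.1 * g ε v.2.2.2.2.2.2)))))

noncomputable def G8 (v : T8) : ℝ := G7 ε v.1 * g ε v.2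

noncomputable def G4 (v : T4) : ℝ := g ε v.1 * (g ε v.2.1 * (g ε v.2.2.1 * g ε v.2.2.2))

variable (hα₂ : 1 ≤ α₂.re) (hα₁ : 1 ≤ α₁.re) (hβ₂ : 1 ≤ β₂.re) (hβ₁ : 1 ≤ β₁.re)
  (hc₀ : 1 + 4*ε ≤ c₀.re) (hc₁ : 1 + 4*ε ≤ c₁.re) (hcm : 1 + 4*ε ≤ cm.re) (hε : 0 ≤ ε)

include hα₂ hα₁ hβ₂ hβ₁ hc₀ hc₁ hcm hε in
lemma W7_bound (v : T7) (hv : C7 v) : ‖W7 α₂ α₁ c₁ c₀ cm β₁ β₂ v‖ ≤ G7 ε v := by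
  obtain ⟨a2,a1,x,y,b2,b1,z⟩ := v
  simp only [C7] at hv
  obtain ⟨h1,h2,h3,h4,h5,h6,h7,h8,h9⟩ := hv
  have ha1 : 0 < a1 := by omega
  have hy : 0 < y := by omega
  have hz : 0 < z := by omega
  have hb1 : 0 < b1 := by omega
  have hy1 : (1:ℝ) ≤ (y:ℝ) := by exact_mod_cast hy
  have hz1 : (1:ℝ) ≤ (z:ℝ) := by exact_mod_cast hz
  simp only [W7, G7, norm_mul, cp_norm h1, cp_norm ha1, cp_norm h4, cp_norm hy,
    cp_norm h7, cp_norm hb1, cp_norm hz]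
  have e1 : (a2:ℝ)^(-α₂.re) ≤ (y:ℝ)^ε * g ε a2 := bound1 h1 (by omega) hα₂ hε
  have e2 : (a1:ℝ)^(-α₁.re) ≤ (y:ℝ)^ε * g ε a1 := bound1 ha1 (by omega) hα₁ hε
  have e3 : (x:ℝ)^(-c₀.re) ≤ (z:ℝ)^ε * g ε x := bound1 h4 (by omega) (by linarith) hε
  have e4 : (y:ℝ)^(-c₁.re) ≤ (y:ℝ)^(-(1+4*ε)) := bound2 hy hc₁
  have e5 : (b2:ℝ)^(-β₂.re) ≤ (z:ℝ)^ε * g ε b2 := bound1 h7 (by omega) hβ₂ hε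
  have e6 : (b1:ℝ)^(-β₁.re) ≤ (z:ℝ)^ε * g ε b1 := bound1 hb1 h9 hβ₁ hε
  have e7 : (z:ℝ)^(-cm.re) ≤ (z:ℝ)^(-(1+4*ε)) := bound2 hz hcm
  have ey : (y:ℝ)^ε * ((y:ℝ)^ε * (y:ℝ)^(-(1+4*ε))) ≤ g ε y := by
    rw [← Real.rpow_add (by linarith), ← Real.rpow_add (by linarith)]
    have h : ε + (ε + -(1+4*ε)) = -(1+2*ε) := by ring
    rw [h, g]
    exact bound2 hy (by linarith)
  have ez : (z:ℝ)^ε * ((z:ℝ)^ε * ((z:ℝ)^ε * (z:ℝ)^(-(1+4*ε)))) ≤ g ε z := by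
    rw [← Real.rpow_add (by linarith), ← Real.rpow_add (by linarith),
      ← Real.rpow_add (by linarith)]
    have h : ε + (ε + (ε + -(1+4*ε))) = -(1+ε) := by ring
    rw [h, g]
  calc (a2:ℝ)^(-α₂.re) * ((a1:ℝ)^(-α₁.re) * ((x:ℝ)^(-c₀.re) * ((y:ℝ)^(-c₁.re) *
        ((b2:ℝ)^(-β₂.re) * ((b1:ℝ)^(-β₁.re) * (z:ℝ)^(-cm.re))))))
      ≤ ((y:ℝ)^ε * g ε a2) * (((y:ℝ)^ε * g ε a1) * (((z:ℝ)^ε * g ε x) * ((y:ℝ)^(-(1+4*ε)) *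
        (((z:ℝ)^ε * g ε b2) * (((z:ℝ)^ε * g ε b1) * (z:ℝ)^(-(1+4*ε))))))) := by
        gcongr <;> first | exact ey | exact ez | (simp only [g]; positivity)
    _ = g ε a2 * (g ε a1 * (g ε x * (((y:ℝ)^ε * ((y:ℝ)^ε * (y:ℝ)^(-(1+4*ε)))) *
        (g ε b2 * (g ε b1 * ((z:ℝ)^ε * ((z:ℝ)^ε * ((z:ℝ)^ε * (z:ℝ)^(-(1+4*ε)))))))))) := by
        ring
    _ ≤ g ε a2 * (g ε a1 * (g ε x * (g ε y * (g ε b2 * (g ε b1 * g ε z))))) := by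
        gcongr <;> first | exact ey | exact ez | (simp only [g]; positivity)

include hα₂ hα₁ hβ₂ hβ₁ hc₀ hc₁ hcm hε in
lemma W8_bound_full (v : T8) (hv : C7 v.1) (hw : 0 < v.2) :
    ‖W8 α₂ α₁ c₁ c₀ cm β₁ β₂ v‖ ≤ G8 ε v := by
  rw [W8, G8, norm_mul, cp_norm hw]
  have h1 := W7_bound α₂ α₁ c₁ c₀ cm β₁ β₂ ε hα₂ hα₁ hβ₂ hβ₁ hc₀ hc₁ hcm hε v.1 hv
  have h2 : (v.2:ℝ)^(-c₀.re) ≤ g ε v.2 := by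
    rw [g]; exact bound2 hw (by linarith)
  exact mul_le_mul h1 h2 (Real.rpow_nonneg (Nat.cast_nonneg _) _)
    (by simp only [G7, g]; positivity)

include hα₂ hα₁ hβ₂ hβ₁ hc₀ hc₁ hcm hε in
lemma W8_bound_pair (v : T8) (hv : Cpair v) : ‖W8 α₂ α₁ c₁ c₀ cm β₁ β₂ v‖ ≤ G8 ε v := by
  obtain ⟨⟨a2,a1,x,y,b2,b1,z⟩,w⟩ := v
  simp only [Cpair] at hv
  obtain ⟨h1,h2,h3,h4,h5,h6,h7,h8,h9,h10⟩ := hv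
  have ha1 : 0 < a1 := by omega
  have hy : 0 < y := by omega
  have hz : 0 < z := by omega
  have hb1 : 0 < b1 := by omega
  have hy1 : (1:ℝ) ≤ (y:ℝ) := by exact_mod_cast hy
  have hz1 : (1:ℝ) ≤ (z:ℝ) := by exact_mod_cast hz
  simp only [W8, W7, G8, G7, norm_mul, cp_norm h1, cp_norm ha1, cp_norm h4, cp_norm hy,
    cp_norm h6, cp_norm hb1, cp_norm hz, cp_norm h9]
  have e1 : (a2:ℝ)^(-α₂.re) ≤ (y:ℝ)^ε * g ε a2 := bound1 h1 (by omega) hα₂ hε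
  have e2 : (a1:ℝ)^(-α₁.re) ≤ (y:ℝ)^ε * g ε a1 := bound1 ha1 (by omega) hα₁ hε
  have e3 : (x:ℝ)^(-c₀.re) ≤ (y:ℝ)^ε * g ε x := bound1 h4 h5 (by linarith) hε
  have e4 : (y:ℝ)^(-c₁.re) ≤ (y:ℝ)^(-(1+4*ε)) := bound2 hy hc₁
  have e5 : (b2:ℝ)^(-β₂.re) ≤ (z:ℝ)^ε * g ε b2 := bound1 h6 (by omega) hβ₂ hε
  have e6 : (b1:ℝ)^(-β₁.re) ≤ (z:ℝ)^ε * g ε b1 := bound1 hb1 h8 hβ₁ hε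
  have e7 : (z:ℝ)^(-cm.re) ≤ (z:ℝ)^(-(1+4*ε)) := bound2 hz hcm
  have e8 : (w:ℝ)^(-c₀.re) ≤ (z:ℝ)^ε * g ε w := bound1 h9 (by omega) (by linarith) hε
  have ey : (y:ℝ)^ε * ((y:ℝ)^ε * ((y:ℝ)^ε * (y:ℝ)^(-(1+4*ε)))) ≤ g ε y := by
    rw [← Real.rpow_add (by linarith), ← Real.rpow_add (by linarith),
      ← Real.rpow_add (by linarith)]
    have h : ε + (ε + (ε + -(1+4*ε))) = -(1+ε) := by ring
    rw [h, g]
  have ez : (z:ℝ)^ε * ((z:ℝ)^ε * ((z:ℝ)^ε * (z:ℝ)^(-(1+4*ε)))) ≤ g ε z := by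
    rw [← Real.rpow_add (by linarith), ← Real.rpow_add (by linarith),
      ← Real.rpow_add (by linarith)]
    have h : ε + (ε + (ε + -(1+4*ε))) = -(1+ε) := by ring
    rw [h, g]
  calc (a2:ℝ)^(-α₂.re) * ((a1:ℝ)^(-α₁.re) * ((x:ℝ)^(-c₀.re) * ((y:ℝ)^(-c₁.re) *
        ((b2:ℝ)^(-β₂.re) * ((b1:ℝ)^(-β₁.re) * (z:ℝ)^(-cm.re)))))) * (w:ℝ)^(-c₀.re)
      ≤ ((y:ℝ)^ε * g ε a2) * (((y:ℝ)^ε * g ε a1) * (((y:ℝ)^ε * g ε x) * ((y:ℝ)^(-(1+4*ε)) *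
        (((z:ℝ)^ε * g ε b2) * (((z:ℝ)^ε * g ε b1) * (z:ℝ)^(-(1+4*ε))))))) *
        ((z:ℝ)^ε * g ε w) := by
        gcongr <;> first | exact ey | exact ez | (simp only [g]; positivity)
    _ = g ε a2 * (g ε a1 * (g ε x * (((y:ℝ)^ε * ((y:ℝ)^ε * ((y:ℝ)^ε * (y:ℝ)^(-(1+4*ε))))) *
        (g ε b2 * (g ε b1 * ((z:ℝ)^ε * ((z:ℝ)^ε * ((z:ℝ)^ε * (z:ℝ)^(-(1+4*ε)))))))))) *
        g ε w := by ring
    _ ≤ g ε a2 * (g ε a1 * (g ε x * (g ε y * (g ε b2 * (g ε b1 * g ε z))))) * g ε w := by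
        gcongr <;> first | exact ey | exact ez | (simp only [g]; positivity)

include hα₂ hα₁ hc₀ hc₁ hε in
lemma W12_bound (v : T4) (hv : C12 v) : ‖W12 α₂ α₁ c₁ c₀ v‖ ≤ G4 ε v := by
  obtain ⟨a2,a1,x,y⟩ := v
  simp only [C12] at hv
  obtain ⟨h1,h2,h3,h4,h5⟩ := hv
  have ha1 : 0 < a1 := by omega
  have hy : 0 < y := by omega
  have hy1 : (1:ℝ) ≤ (y:ℝ) := by exact_mod_cast hy
  simp only [W12, G4, norm_mul, cp_norm h1, cp_norm ha1, cp_norm h4, cp_norm hy]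
  have e1 : (a2:ℝ)^(-α₂.re) ≤ (y:ℝ)^ε * g ε a2 := bound1 h1 (by omega) hα₂ hε
  have e2 : (a1:ℝ)^(-α₁.re) ≤ (y:ℝ)^ε * g ε a1 := bound1 ha1 (by omega) hα₁ hε
  have e3 : (x:ℝ)^(-c₀.re) ≤ (y:ℝ)^ε * g ε x := bound1 h4 h5 (by linarith) hε
  have e4 : (y:ℝ)^(-c₁.re) ≤ (y:ℝ)^(-(1+4*ε)) := bound2 hy hc₁
  have ey : (y:ℝ)^ε * ((y:ℝ)^ε * ((y:ℝ)^ε * (y:ℝ)^(-(1+4*ε)))) ≤ g ε y := by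
    rw [← Real.rpow_add (by linarith), ← Real.rpow_add (by linarith),
      ← Real.rpow_add (by linarith)]
    have h : ε + (ε + (ε + -(1+4*ε))) = -(1+ε) := by ring
    rw [h, g]
  calc (a2:ℝ)^(-α₂.re) * ((a1:ℝ)^(-α₁.re) * ((x:ℝ)^(-c₀.re) * (y:ℝ)^(-c₁.re)))
      ≤ ((y:ℝ)^ε * g ε a2) * (((y:ℝ)^ε * g ε a1) * (((y:ℝ)^ε * g ε x) *
        (y:ℝ)^(-(1+4*ε)))) := by
        gcongr <;> first | exact ey | (simp only [g]; positivity)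
    _ = g ε a2 * (g ε a1 * (g ε x * ((y:ℝ)^ε * ((y:ℝ)^ε * ((y:ℝ)^ε *
        (y:ℝ)^(-(1+4*ε))))))) := by ring
    _ ≤ g ε a2 * (g ε a1 * (g ε x * g ε y)) := by
        gcongr <;> first | exact ey | (simp only [g]; positivity)

include hβ₂ hβ₁ hc₀ hcm hε in
lemma W21_bound (v : T4) (hv : C21 v) : ‖W21 c₀ cm β₁ β₂ v‖ ≤ G4 ε v := by
  obtain ⟨w,b2,b1,z⟩ := v
  simp only [C21] at hv
  obtain ⟨h1,h2,h3,h4,h5⟩ := hv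
  have hb1 : 0 < b1 := by omega
  have hz : 0 < z := by omega
  have hz1 : (1:ℝ) ≤ (z:ℝ) := by exact_mod_cast hz
  simp only [W21, G4, norm_mul, cp_norm h1, cp_norm h3, cp_norm hb1, cp_norm hz]
  have e1 : (w:ℝ)^(-c₀.re) ≤ (z:ℝ)^ε * g ε w := bound1 h1 (by omega) (by linarith) hε
  have e2 : (b2:ℝ)^(-β₂.re) ≤ (z:ℝ)^ε * g ε b2 := bound1 h3 (by omega) hβ₂ hε
  have e3 : (b1:ℝ)^(-β₁.re) ≤ (z:ℝ)^ε * g ε b1 := bound1 hb1 h5 hβ₁ hε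
  have e4 : (z:ℝ)^(-cm.re) ≤ (z:ℝ)^(-(1+4*ε)) := bound2 hz hcm
  have ez : (z:ℝ)^ε * ((z:ℝ)^ε * ((z:ℝ)^ε * (z:ℝ)^(-(1+4*ε)))) ≤ g ε z := by
    rw [← Real.rpow_add (by linarith), ← Real.rpow_add (by linarith),
      ← Real.rpow_add (by linarith)]
    have h : ε + (ε + (ε + -(1+4*ε))) = -(1+ε) := by ring
    rw [h, g]
  calc (w:ℝ)^(-c₀.re) * ((b2:ℝ)^(-β₂.re) * ((b1:ℝ)^(-β₁.re) * (z:ℝ)^(-cm.re)))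
      ≤ ((z:ℝ)^ε * g ε w) * (((z:ℝ)^ε * g ε b2) * (((z:ℝ)^ε * g ε b1) *
        (z:ℝ)^(-(1+4*ε)))) := by
        gcongr <;> first | exact ez | (simp only [g]; positivity)
    _ = g ε w * (g ε b2 * (g ε b1 * ((z:ℝ)^ε * ((z:ℝ)^ε * ((z:ℝ)^ε *
        (z:ℝ)^(-(1+4*ε))))))) := by ring
    _ ≤ g ε w * (g ε b2 * (g ε b1 * g ε z)) := by
        gcongr <;> first | exact ez | (simp only [g]; positivity)

end

/-! ### Summability of the dominating functions -/

lemma G7_summable {ε : ℝ} (hε : 0 < ε) : Summable (G7 ε) := by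
  have h := g_summable hε
  have hn := g_nonneg ε
  have p2 : Summable (fun v : ℕ×ℕ => g ε v.1 * g ε v.2) :=
    h.mul_of_nonneg h (fun _ => hn _) (fun _ => hn _)
  have q2 : ∀ v : ℕ×ℕ, 0 ≤ g ε v.1 * g ε v.2 := fun _ => mul_nonneg (hn _) (hn _)
  have p3 : Summable (fun v : ℕ×ℕ×ℕ => g ε v.1 * (g ε v.2.1 * g ε v.2.2)) :=
    h.mul_of_nonneg p2 (fun _ => hn _) q2
  have q3 : ∀ v : ℕ×ℕ×ℕ, 0 ≤ g ε v.1 * (g ε v.2.1 * g ε v.2.2) :=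
    fun _ => mul_nonneg (hn _) (q2 _)
  have p4 : Summable (fun v : ℕ×ℕ×ℕ×ℕ =>
      g ε v.1 * (g ε v.2.1 * (g ε v.2.2.1 * g ε v.2.2.2))) :=
    h.mul_of_nonneg p3 (fun _ => hn _) q3
  have q4 : ∀ v : ℕ×ℕ×ℕ×ℕ, 0 ≤ g ε v.1 * (g ε v.2.1 * (g ε v.2.2.1 * g ε v.2.2.2)) :=
    fun _ => mul_nonneg (hn _) (q3 _)
  have p5 : Summable (fun v : ℕ×ℕ×ℕ×ℕ×ℕ =>
      g ε v.1 * (g ε v.2.1 * (g ε v.2.2.1 * (g ε v.2.2.2.1 * g ε v.2.2.2.2)))) :=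
    h.mul_of_nonneg p4 (fun _ => hn _) q4
  have q5 : ∀ v : ℕ×ℕ×ℕ×ℕ×ℕ,
      0 ≤ g ε v.1 * (g ε v.2.1 * (g ε v.2.2.1 * (g ε v.2.2.2.1 * g ε v.2.2.2.2))) :=
    fun _ => mul_nonneg (hn _) (q4 _)
  have p6 : Summable (fun v : ℕ×ℕ×ℕ×ℕ×ℕ×ℕ =>
      g ε v.1 * (g ε v.2.1 * (g ε v.2.2.1 * (g ε v.2.2.2.1 *
        (g ε v.2.2.2.2.1 * g ε v.2.2.2.2.2))))) :=
    h.mul_of_nonneg p5 (fun _ => hn _) q5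
  have q6 : ∀ v : ℕ×ℕ×ℕ×ℕ×ℕ×ℕ,
      0 ≤ g ε v.1 * (g ε v.2.1 * (g ε v.2.2.1 * (g ε v.2.2.2.1 *
        (g ε v.2.2.2.2.1 * g ε v.2.2.2.2.2)))) :=
    fun _ => mul_nonneg (hn _) (q5 _)
  have p7 : Summable (fun v : T7 =>
      g ε v.1 * (g ε v.2.1 * (g ε v.2.2.1 * (g ε v.2.2.2.1 *
        (g ε v.2.2.2.2.1 * (g ε v.2.2.2.2.2.1 * g ε v.2.2.2.2.2.2)))))) :=
    h.mul_of_nonneg p6 (fun _ => hn _) q6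
  exact p7

lemma G7_nonneg (ε : ℝ) (v : T7) : 0 ≤ G7 ε v := by
  simp only [G7, g]; positivity

lemma G8_summable {ε : ℝ} (hε : 0 < ε) : Summable (G8 ε) :=
  (G7_summable hε).mul_of_nonneg (g_summable hε) (G7_nonneg ε) (g_nonneg ε)

lemma G8_nonneg (ε : ℝ) (v : T8) : 0 ≤ G8 ε v := mul_nonneg (G7_nonneg ε _) (g_nonneg ε _)

lemma G4_summable {ε : ℝ} (hε : 0 < ε) : Summable (G4 ε) := by
  have h := g_summable hε
  have hn := g_nonneg ε
  have p2 : Summable (fun v : ℕ×ℕ => g ε v.1 * g ε v.2) :=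
    h.mul_of_nonneg h (fun _ => hn _) (fun _ => hn _)
  have q2 : ∀ v : ℕ×ℕ, 0 ≤ g ε v.1 * g ε v.2 := fun _ => mul_nonneg (hn _) (hn _)
  have p3 : Summable (fun v : ℕ×ℕ×ℕ => g ε v.1 * (g ε v.2.1 * g ε v.2.2)) :=
    h.mul_of_nonneg p2 (fun _ => hn _) q2
  have q3 : ∀ v : ℕ×ℕ×ℕ, 0 ≤ g ε v.1 * (g ε v.2.1 * g ε v.2.2) :=
    fun _ => mul_nonneg (hn _) (q2 _)
  exact h.mul_of_nonneg p3 (fun _ => hn _) q3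

lemma G4_nonneg (ε : ℝ) (v : T4) : 0 ≤ G4 ε v := by
  simp only [G4, g]; positivity

/-- Summability of an indicator-type function from a dominating summable function. -/
lemma summable_ind {ι : Type*} {C : ι → Prop} [DecidablePred C] {W : ι → ℂ} {G : ι → ℝ}
    (hG : Summable G) (hGn : ∀ v, 0 ≤ G v) (h : ∀ v, C v → ‖W v‖ ≤ G v) :
    Summable (fun v => ‖(if C v then W v else 0 : ℂ)‖) := by
  refine hG.of_nonneg_of_le (fun v => norm_nonneg _) (fun v => ?_)
  by_cases hc : C v
  · simpa [hc] using h v hc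
  · simpa [hc] using hGn v


/-! ### Tableaux of the full shape θ -/

def fill8 (v : T8) : Box → ℕ := fun b =>
  if b = (1,4) then v.1.1 else if b = (2,4) then v.1.2.1 else if b = (3,3) then v.1.2.2.1
  else if b = (3,4) then v.1.2.2.2.1 else if b = (4,1) then v.1.2.2.2.2.1
  else if b = (4,2) then v.1.2.2.2.2.2.1 else if b = (4,3) then v.1.2.2.2.2.2.2
  else if b = (4,4) then v.2 else 1

lemma ssyt8 {v : T8} (hv : C8 v) :
    IsSSYT {(1,4),(2,4),(3,3),(3,4),(4,1),(4,2),(4,3),(4,4)} (fill8 v) := by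
  obtain ⟨⟨a2,a1,x,y,b2,b1,z⟩,w⟩ := v
  simp only [C8, C7] at hv
  refine ⟨?_, ?_, ?_, ?_⟩
  · intro b hb
    fin_cases hb <;> simp only [fill8] <;> norm_num <;> omega
  · intro i j h1 h2
    simp only [Finset.mem_insert, Finset.mem_singleton, Prod.mk.injEq] at h1 h2
    rcases h1 with ⟨rfl,rfl⟩|⟨rfl,rfl⟩|⟨rfl,rfl⟩|⟨rfl,rfl⟩|⟨rfl,rfl⟩|⟨rfl,rfl⟩|⟨rfl,rfl⟩|⟨rfl,rfl⟩ <;>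
      simp only [fill8] <;> (try norm_num at h2 ⊢) <;> omega
  · intro i j h1 h2
    simp only [Finset.mem_insert, Finset.mem_singleton, Prod.mk.injEq] at h1 h2
    rcases h1 with ⟨rfl,rfl⟩|⟨rfl,rfl⟩|⟨rfl,rfl⟩|⟨rfl,rfl⟩|⟨rfl,rfl⟩|⟨rfl,rfl⟩|⟨rfl,rfl⟩|⟨rfl,rfl⟩ <;>
      simp only [fill8] <;> (try norm_num at h2 ⊢) <;> omega
  · intro b hb
    simp only [Finset.mem_insert, Finset.mem_singleton] at hb
    push_neg at hb
    simp only [fill8, if_neg hb.1, if_neg hb.2.1, if_neg hb.2.2.1, if_neg hb.2.2.2.1,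
      if_neg hb.2.2.2.2.1, if_neg hb.2.2.2.2.2.1, if_neg hb.2.2.2.2.2.2.1,
      if_neg hb.2.2.2.2.2.2.2]

lemma C8_of {t : Box → ℕ}
    (ht : IsSSYT {(1,4),(2,4),(3,3),(3,4),(4,1),(4,2),(4,3),(4,4)} t) :
    C8 ((t (1,4), t (2,4), t (3,3), t (3,4), t (4,1), t (4,2), t (4,3)), t (4,4)) := by
  obtain ⟨hpos, hrow, hcol, -⟩ := ht
  exact ⟨⟨hpos (1,4) (by decide), hcol 1 4 (by decide) (by decide),
    hcol 2 4 (by decide) (by decide), hpos (3,3) (by decide),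
    hrow 3 3 (by decide) (by decide), hcol 3 3 (by decide) (by decide),
    hpos (4,1) (by decide), hrow 4 1 (by decide) (by decide),
    hrow 4 2 (by decide) (by decide)⟩,
    hrow 4 3 (by decide) (by decide), hcol 3 4 (by decide) (by decide)⟩

def e8 : {v : T8 // C8 v} ≃ SSYT {(1,4),(2,4),(3,3),(3,4),(4,1),(4,2),(4,3),(4,4)} where
  toFun v := ⟨fill8 v.1, ssyt8 v.2⟩
  invFun T := ⟨((T.1 (1,4), T.1 (2,4), T.1 (3,3), T.1 (3,4), T.1 (4,1), T.1 (4,2),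
    T.1 (4,3)), T.1 (4,4)), C8_of T.2⟩
  left_inv v := by
    apply Subtype.ext
    obtain ⟨⟨⟨a2,a1,x,y,b2,b1,z⟩,w⟩,hv⟩ := v
    simp only [fill8]
    norm_num
  right_inv T := by
    apply Subtype.ext
    funext b
    show fill8 _ b = T.1 b
    simp only [fill8]
    split_ifs with h1 h2 h3 h4 h5 h6 h7 h8
    · rw [h1]
    · rw [h2]
    · rw [h3]
    · rw [h4]
    · rw [h5]
    · rw [h6]
    · rw [h7]
    · rw [h8]
    · exact (T.2.2.2.2 b (by
        simp only [Finset.mem_insert, Finset.mem_singleton]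
        push_neg
        exact ⟨h1,h2,h3,h4,h5,h6,h7,h8⟩)).symm

lemma wt8_eq (s : Box → ℂ) (v : T8) :
    wt {(1,4),(2,4),(3,3),(3,4),(4,1),(4,2),(4,3),(4,4)} s (fill8 v) =
    cp v.1.1 (s (1,4)) * (cp v.1.2.1 (s (2,4)) * (cp v.1.2.2.1 (s (3,3)) *
      (cp v.1.2.2.2.1 (s (3,4)) * (cp v.1.2.2.2.2.1 (s (4,1)) *
        (cp v.1.2.2.2.2.2.1 (s (4,2)) *
        (cp v.1.2.2.2.2.2.2 (s (4,3)) * cp v.2 (s (4,4)))))))) := by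
  rw [wt, Finset.prod_insert (by decide), Finset.prod_insert (by decide),
    Finset.prod_insert (by decide), Finset.prod_insert (by decide),
    Finset.prod_insert (by decide), Finset.prod_insert (by decide),
    Finset.prod_insert (by decide), Finset.prod_singleton]
  simp only [fill8, cp]
  norm_num

section
variable (α₂ α₁ c₁ c₀ cm β₁ β₂ : ℂ)

lemma zeta8_eq :
    zetaS {(1,4),(2,4),(3,3),(3,4),(4,1),(4,2),(4,3),(4,4)}
        (fun x => if x = (1,4) then α₂ else if x = (2,4) then α₁
          else if x = (3,3) then c₀ else if x = (3,4) then c₁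
          else if x = (4,1) then β₂ else if x = (4,2) then β₁
          else if x = (4,3) then cm else if x = (4,4) then c₀ else 1) =
    ∑' v : T8, (if C8 v then W8 α₂ α₁ c₁ c₀ cm β₁ β₂ v else 0) := by
  rw [zetaS, ← Equiv.tsum_eq e8]
  have key : ∀ a : {v : T8 // C8 v},
      wt {(1,4),(2,4),(3,3),(3,4),(4,1),(4,2),(4,3),(4,4)}
        (fun x => if x = (1,4) then α₂ else if x = (2,4) then α₁
          else if x = (3,3) then c₀ else if x = (3,4) then c₁
          else if x = (4,1) then β₂ else if x = (4,2) then β₁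
          else if x = (4,3) then cm else if x = (4,4) then c₀ else 1)
        ((e8 a).1) = W8 α₂ α₁ c₁ c₀ cm β₁ β₂ a.1 := by
    intro a
    rw [show ((e8 a).1 : Box → ℕ) = fill8 a.1 from rfl, wt8_eq]
    norm_num [W8, W7]
    ring
  refine Eq.trans (tsum_congr key) (Eq.trans
    (tsum_subtype {v : T8 | C8 v} (W8 α₂ α₁ c₁ c₀ cm β₁ β₂)) (tsum_congr fun v => ?_))
  by_cases h : C8 v
  · rw [if_pos h]; exact Set.indicator_of_mem (show v ∈ {v : T8 | C8 v} from h) _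
  · rw [if_neg h]; exact Set.indicator_of_notMem (show v ∉ {v : T8 | C8 v} from h) _

end
/-! ### Tableaux of θ₁₁ (7 boxes) -/

def fill7 (v : T7) : Box → ℕ := fun b =>
  if b = (1,4) then v.1 else if b = (2,4) then v.2.1 else if b = (3,3) then v.2.2.1
  else if b = (3,4) then v.2.2.2.1 else if b = (4,1) then v.2.2.2.2.1
  else if b = (4,2) then v.2.2.2.2.2.1 else if b = (4,3) then v.2.2.2.2.2.2 else 1

lemma ssyt7 {v : T7} (hv : C7 v) :
    IsSSYT {(1,4),(2,4),(3,3),(3,4),(4,1),(4,2),(4,3)} (fill7 v) := by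
  obtain ⟨a2,a1,x,y,b2,b1,z⟩ := v
  simp only [C7] at hv
  refine ⟨?_, ?_, ?_, ?_⟩
  · intro b hb
    fin_cases hb <;> simp only [fill7] <;> norm_num <;> omega
  · intro i j h1 h2
    simp only [Finset.mem_insert, Finset.mem_singleton, Prod.mk.injEq] at h1 h2
    rcases h1 with ⟨rfl,rfl⟩|⟨rfl,rfl⟩|⟨rfl,rfl⟩|⟨rfl,rfl⟩|⟨rfl,rfl⟩|⟨rfl,rfl⟩|⟨rfl,rfl⟩ <;>
      simp only [fill7] <;> (try norm_num at h2 ⊢) <;> omega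
  · intro i j h1 h2
    simp only [Finset.mem_insert, Finset.mem_singleton, Prod.mk.injEq] at h1 h2
    rcases h1 with ⟨rfl,rfl⟩|⟨rfl,rfl⟩|⟨rfl,rfl⟩|⟨rfl,rfl⟩|⟨rfl,rfl⟩|⟨rfl,rfl⟩|⟨rfl,rfl⟩ <;>
      simp only [fill7] <;> (try norm_num at h2 ⊢) <;> omega
  · intro b hb
    simp only [Finset.mem_insert, Finset.mem_singleton] at hb
    push_neg at hb
    simp only [fill7, if_neg hb.1, if_neg hb.2.1, if_neg hb.2.2.1, if_neg hb.2.2.2.1,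
      if_neg hb.2.2.2.2.1, if_neg hb.2.2.2.2.2.1, if_neg hb.2.2.2.2.2.2]

lemma C7_of {t : Box → ℕ}
    (ht : IsSSYT {(1,4),(2,4),(3,3),(3,4),(4,1),(4,2),(4,3)} t) :
    C7 (t (1,4), t (2,4), t (3,3), t (3,4), t (4,1), t (4,2), t (4,3)) := by
  obtain ⟨hpos, hrow, hcol, -⟩ := ht
  exact ⟨hpos (1,4) (by decide), hcol 1 4 (by decide) (by decide),
    hcol 2 4 (by decide) (by decide), hpos (3,3) (by decide),
    hrow 3 3 (by decide) (by decide), hcol 3 3 (by decide) (by decide),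
    hpos (4,1) (by decide), hrow 4 1 (by decide) (by decide),
    hrow 4 2 (by decide) (by decide)⟩

def e7 : {v : T7 // C7 v} ≃ SSYT {(1,4),(2,4),(3,3),(3,4),(4,1),(4,2),(4,3)} where
  toFun v := ⟨fill7 v.1, ssyt7 v.2⟩
  invFun T := ⟨(T.1 (1,4), T.1 (2,4), T.1 (3,3), T.1 (3,4), T.1 (4,1), T.1 (4,2),
    T.1 (4,3)), C7_of T.2⟩
  left_inv v := by
    apply Subtype.ext
    obtain ⟨⟨a2,a1,x,y,b2,b1,z⟩,hv⟩ := v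
    simp only [fill7]
    norm_num
  right_inv T := by
    apply Subtype.ext
    funext b
    show fill7 _ b = T.1 b
    simp only [fill7]
    split_ifs with h1 h2 h3 h4 h5 h6 h7
    · rw [h1]
    · rw [h2]
    · rw [h3]
    · rw [h4]
    · rw [h5]
    · rw [h6]
    · rw [h7]
    · exact (T.2.2.2.2 b (by
        simp only [Finset.mem_insert, Finset.mem_singleton]
        push_neg
        exact ⟨h1,h2,h3,h4,h5,h6,h7⟩)).symm

lemma wt7_eq (s : Box → ℂ) (v : T7) :
    wt {(1,4),(2,4),(3,3),(3,4),(4,1),(4,2),(4,3)} s (fill7 v) =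
    cp v.1 (s (1,4)) * (cp v.2.1 (s (2,4)) * (cp v.2.2.1 (s (3,3)) *
      (cp v.2.2.2.1 (s (3,4)) * (cp v.2.2.2.2.1 (s (4,1)) *
        (cp v.2.2.2.2.2.1 (s (4,2)) * cp v.2.2.2.2.2.2 (s (4,3))))))) := by
  rw [wt, Finset.prod_insert (by decide), Finset.prod_insert (by decide),
    Finset.prod_insert (by decide), Finset.prod_insert (by decide),
    Finset.prod_insert (by decide), Finset.prod_insert (by decide),
    Finset.prod_singleton]
  simp only [fill7, cp]
  norm_num

/-! ### Tableaux of θ₁₂ -/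

def fill12 (v : T4) : Box → ℕ := fun b =>
  if b = (1,2) then v.1 else if b = (2,2) then v.2.1 else if b = (3,1) then v.2.2.1
  else if b = (3,2) then v.2.2.2 else 1

lemma ssyt12 {v : T4} (hv : C12 v) :
    IsSSYT {(1,2),(2,2),(3,1),(3,2)} (fill12 v) := by
  obtain ⟨a2,a1,x,y⟩ := v
  simp only [C12] at hv
  refine ⟨?_, ?_, ?_, ?_⟩
  · intro b hb
    fin_cases hb <;> simp only [fill12] <;> norm_num <;> omega
  · intro i j h1 h2
    simp only [Finset.mem_insert, Finset.mem_singleton, Prod.mk.injEq] at h1 h2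
    rcases h1 with ⟨rfl,rfl⟩|⟨rfl,rfl⟩|⟨rfl,rfl⟩|⟨rfl,rfl⟩ <;>
      simp only [fill12] <;> (try norm_num at h2 ⊢) <;> omega
  · intro i j h1 h2
    simp only [Finset.mem_insert, Finset.mem_singleton, Prod.mk.injEq] at h1 h2
    rcases h1 with ⟨rfl,rfl⟩|⟨rfl,rfl⟩|⟨rfl,rfl⟩|⟨rfl,rfl⟩ <;>
      simp only [fill12] <;> (try norm_num at h2 ⊢) <;> omega
  · intro b hb
    simp only [Finset.mem_insert, Finset.mem_singleton] at hb
    push_neg at hb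
    simp only [fill12, if_neg hb.1, if_neg hb.2.1, if_neg hb.2.2.1, if_neg hb.2.2.2]

lemma C12_of {t : Box → ℕ} (ht : IsSSYT {(1,2),(2,2),(3,1),(3,2)} t) :
    C12 (t (1,2), t (2,2), t (3,1), t (3,2)) := by
  obtain ⟨hpos, hrow, hcol, -⟩ := ht
  exact ⟨hpos (1,2) (by decide), hcol 1 2 (by decide) (by decide),
    hcol 2 2 (by decide) (by decide), hpos (3,1) (by decide),
    hrow 3 1 (by decide) (by decide)⟩

def e12 : {v : T4 // C12 v} ≃ SSYT {(1,2),(2,2),(3,1),(3,2)} where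
  toFun v := ⟨fill12 v.1, ssyt12 v.2⟩
  invFun T := ⟨(T.1 (1,2), T.1 (2,2), T.1 (3,1), T.1 (3,2)), C12_of T.2⟩
  left_inv v := by
    apply Subtype.ext
    obtain ⟨⟨a2,a1,x,y⟩,hv⟩ := v
    simp only [fill12]
    norm_num
  right_inv T := by
    apply Subtype.ext
    funext b
    show fill12 _ b = T.1 b
    simp only [fill12]
    split_ifs with h1 h2 h3 h4
    · rw [h1]
    · rw [h2]
    · rw [h3]
    · rw [h4]
    · exact (T.2.2.2.2 b (by
        simp only [Finset.mem_insert, Finset.mem_singleton]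
        push_neg
        exact ⟨h1,h2,h3,h4⟩)).symm

lemma wt12_eq (s : Box → ℂ) (v : T4) :
    wt {(1,2),(2,2),(3,1),(3,2)} s (fill12 v) =
    cp v.1 (s (1,2)) * (cp v.2.1 (s (2,2)) * (cp v.2.2.1 (s (3,1)) *
      cp v.2.2.2 (s (3,2)))) := by
  rw [wt, Finset.prod_insert (by decide), Finset.prod_insert (by decide),
    Finset.prod_insert (by decide), Finset.prod_singleton]
  simp only [fill12, cp]
  norm_num

/-! ### Tableaux of θ₂₁ -/

def fill21 (v : T4) : Box → ℕ := fun b =>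
  if b = (1,3) then v.1 else if b = (2,1) then v.2.1 else if b = (2,2) then v.2.2.1
  else if b = (2,3) then v.2.2.2 else 1

lemma ssyt21 {v : T4} (hv : C21 v) :
    IsSSYT {(1,3),(2,1),(2,2),(2,3)} (fill21 v) := by
  obtain ⟨w,b2,b1,z⟩ := v
  simp only [C21] at hv
  refine ⟨?_, ?_, ?_, ?_⟩
  · intro b hb
    fin_cases hb <;> simp only [fill21] <;> norm_num <;> omega
  · intro i j h1 h2
    simp only [Finset.mem_insert, Finset.mem_singleton, Prod.mk.injEq] at h1 h2
    rcases h1 with ⟨rfl,rfl⟩|⟨rfl,rfl⟩|⟨rfl,rfl⟩|⟨rfl,rfl⟩ <;>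
      simp only [fill21] <;> (try norm_num at h2 ⊢) <;> omega
  · intro i j h1 h2
    simp only [Finset.mem_insert, Finset.mem_singleton, Prod.mk.injEq] at h1 h2
    rcases h1 with ⟨rfl,rfl⟩|⟨rfl,rfl⟩|⟨rfl,rfl⟩|⟨rfl,rfl⟩ <;>
      simp only [fill21] <;> (try norm_num at h2 ⊢) <;> omega
  · intro b hb
    simp only [Finset.mem_insert, Finset.mem_singleton] at hb
    push_neg at hb
    simp only [fill21, if_neg hb.1, if_neg hb.2.1, if_neg hb.2.2.1, if_neg hb.2.2.2]

lemma C21_of {t : Box → ℕ} (ht : IsSSYT {(1,3),(2,1),(2,2),(2,3)} t) :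
    C21 (t (1,3), t (2,1), t (2,2), t (2,3)) := by
  obtain ⟨hpos, hrow, hcol, -⟩ := ht
  exact ⟨hpos (1,3) (by decide), hcol 1 3 (by decide) (by decide),
    hpos (2,1) (by decide), hrow 2 1 (by decide) (by decide),
    hrow 2 2 (by decide) (by decide)⟩

def e21 : {v : T4 // C21 v} ≃ SSYT {(1,3),(2,1),(2,2),(2,3)} where
  toFun v := ⟨fill21 v.1, ssyt21 v.2⟩
  invFun T := ⟨(T.1 (1,3), T.1 (2,1), T.1 (2,2), T.1 (2,3)), C21_of T.2⟩
  left_inv v := by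
    apply Subtype.ext
    obtain ⟨⟨w,b2,b1,z⟩,hv⟩ := v
    simp only [fill21]
    norm_num
  right_inv T := by
    apply Subtype.ext
    funext b
    show fill21 _ b = T.1 b
    simp only [fill21]
    split_ifs with h1 h2 h3 h4
    · rw [h1]
    · rw [h2]
    · rw [h3]
    · rw [h4]
    · exact (T.2.2.2.2 b (by
        simp only [Finset.mem_insert, Finset.mem_singleton]
        push_neg
        exact ⟨h1,h2,h3,h4⟩)).symm

lemma wt21_eq (s : Box → ℂ) (v : T4) :
    wt {(1,3),(2,1),(2,2),(2,3)} s (fill21 v) =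
    cp v.1 (s (1,3)) * (cp v.2.1 (s (2,1)) * (cp v.2.2.1 (s (2,2)) *
      cp v.2.2.2 (s (2,3)))) := by
  rw [wt, Finset.prod_insert (by decide), Finset.prod_insert (by decide),
    Finset.prod_insert (by decide), Finset.prod_singleton]
  simp only [fill21, cp]
  norm_num

/-! ### Tableaux of the single box -/

def fill1 (n : ℕ) : Box → ℕ := fun b => if b = (1,1) then n else 1

lemma ssyt1 {n : ℕ} (hn : 0 < n) : IsSSYT {(1,1)} (fill1 n) := by
  refine ⟨?_, ?_, ?_, ?_⟩
  · intro b hb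
    fin_cases hb <;> simp only [fill1] <;> norm_num <;> omega
  · intro i j h1 h2
    simp only [Finset.mem_singleton, Prod.mk.injEq] at h1 h2
    omega
  · intro i j h1 h2
    simp only [Finset.mem_singleton, Prod.mk.injEq] at h1 h2
    omega
  · intro b hb
    simp only [Finset.mem_singleton] at hb
    simp only [fill1, if_neg hb]

def e1 : {n : ℕ // 0 < n} ≃ SSYT {(1,1)} where
  toFun v := ⟨fill1 v.1, ssyt1 v.2⟩
  invFun T := ⟨T.1 (1,1), T.2.1 (1,1) (by decide)⟩
  left_inv v := by
    apply Subtype.ext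
    simp only [fill1]
    norm_num
  right_inv T := by
    apply Subtype.ext
    funext b
    show fill1 _ b = T.1 b
    simp only [fill1]
    split_ifs with h1
    · rw [h1]
    · exact (T.2.2.2.2 b (by simpa using h1)).symm

lemma wt1_eq (s : Box → ℂ) (n : ℕ) :
    wt {(1,1)} s (fill1 n) = cp n (s (1,1)) := by
  rw [wt, Finset.prod_singleton]
  simp only [fill1, cp]
  norm_num

/-! ### Reindexing equivalences on tuples -/

def eP : T8 ≃ T4 × T4 where
  toFun v := ((v.1.1, v.1.2.1, v.1.2.2.1, v.1.2.2.2.1),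
    (v.2, v.1.2.2.2.2.1, v.1.2.2.2.2.2.1, v.1.2.2.2.2.2.2))
  invFun p := ((p.1.1, p.1.2.1, p.1.2.2.1, p.1.2.2.2, p.2.2.1, p.2.2.2.1, p.2.2.2.2), p.2.1)
  left_inv v := rfl
  right_inv p := rfl

def swapE : T8 ≃ T8 where
  toFun v := ((v.1.1, v.1.2.1, v.2, v.1.2.2.2.1, v.1.2.2.2.2.1, v.1.2.2.2.2.2.1,
    v.1.2.2.2.2.2.2), v.1.2.2.1)
  invFun v := ((v.1.1, v.1.2.1, v.2, v.1.2.2.2.1, v.1.2.2.2.2.1, v.1.2.2.2.2.2.1,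
    v.1.2.2.2.2.2.2), v.1.2.2.1)
  left_inv v := rfl
  right_inv v := rfl

/-! ### The zeta values as explicit tuple sums -/

section
variable (α₂ α₁ c₁ c₀ cm β₁ β₂ : ℂ)

lemma zeta7_eq :
    zetaS {(1,4),(2,4),(3,3),(3,4),(4,1),(4,2),(4,3)}
        (fun x => if x = (1,4) then α₂ else if x = (2,4) then α₁
          else if x = (3,3) then c₀ else if x = (3,4) then c₁
          else if x = (4,1) then β₂ else if x = (4,2) then β₁
          else if x = (4,3) then cm else 1) =
    ∑' v : T7, (if C7 v then W7 α₂ α₁ c₁ c₀ cm β₁ β₂ v else 0) := by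
  rw [zetaS, ← Equiv.tsum_eq e7]
  have key : ∀ a : {v : T7 // C7 v},
      wt {(1,4),(2,4),(3,3),(3,4),(4,1),(4,2),(4,3)}
        (fun x => if x = (1,4) then α₂ else if x = (2,4) then α₁
          else if x = (3,3) then c₀ else if x = (3,4) then c₁
          else if x = (4,1) then β₂ else if x = (4,2) then β₁
          else if x = (4,3) then cm else 1)
        ((e7 a).1) = W7 α₂ α₁ c₁ c₀ cm β₁ β₂ a.1 := by
    intro a
    rw [show ((e7 a).1 : Box → ℕ) = fill7 a.1 from rfl, wt7_eq]
    norm_num [W7]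
  refine Eq.trans (tsum_congr key) (Eq.trans
    (tsum_subtype {v : T7 | C7 v} (W7 α₂ α₁ c₁ c₀ cm β₁ β₂)) (tsum_congr fun v => ?_))
  by_cases h : C7 v
  · rw [if_pos h]; exact Set.indicator_of_mem (show v ∈ {v : T7 | C7 v} from h) _
  · rw [if_neg h]; exact Set.indicator_of_notMem (show v ∉ {v : T7 | C7 v} from h) _

lemma zeta12_eq :
    zetaS {(1,2),(2,2),(3,1),(3,2)}
        (fun x => if x = (1,2) then α₂ else if x = (2,2) then α₁
          else if x = (3,1) then c₀ else if x = (3,2) then c₁ else 1) =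
    ∑' v : T4, (if C12 v then W12 α₂ α₁ c₁ c₀ v else 0) := by
  rw [zetaS, ← Equiv.tsum_eq e12]
  have key : ∀ a : {v : T4 // C12 v},
      wt {(1,2),(2,2),(3,1),(3,2)}
        (fun x => if x = (1,2) then α₂ else if x = (2,2) then α₁
          else if x = (3,1) then c₀ else if x = (3,2) then c₁ else 1)
        ((e12 a).1) = W12 α₂ α₁ c₁ c₀ a.1 := by
    intro a
    rw [show ((e12 a).1 : Box → ℕ) = fill12 a.1 from rfl, wt12_eq]
    norm_num [W12]
  refine Eq.trans (tsum_congr key) (Eq.trans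
    (tsum_subtype {v : T4 | C12 v} (W12 α₂ α₁ c₁ c₀)) (tsum_congr fun v => ?_))
  by_cases h : C12 v
  · rw [if_pos h]; exact Set.indicator_of_mem (show v ∈ {v : T4 | C12 v} from h) _
  · rw [if_neg h]; exact Set.indicator_of_notMem (show v ∉ {v : T4 | C12 v} from h) _

lemma zeta21_eq :
    zetaS {(1,3),(2,1),(2,2),(2,3)}
        (fun x => if x = (1,3) then c₀ else if x = (2,1) then β₂
          else if x = (2,2) then β₁ else if x = (2,3) then cm else 1) =
    ∑' v : T4, (if C21 v then W21 c₀ cm β₁ β₂ v else 0) := by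
  rw [zetaS, ← Equiv.tsum_eq e21]
  have key : ∀ a : {v : T4 // C21 v},
      wt {(1,3),(2,1),(2,2),(2,3)}
        (fun x => if x = (1,3) then c₀ else if x = (2,1) then β₂
          else if x = (2,2) then β₁ else if x = (2,3) then cm else 1)
        ((e21 a).1) = W21 c₀ cm β₁ β₂ a.1 := by
    intro a
    rw [show ((e21 a).1 : Box → ℕ) = fill21 a.1 from rfl, wt21_eq]
    norm_num [W21]
  refine Eq.trans (tsum_congr key) (Eq.trans
    (tsum_subtype {v : T4 | C21 v} (W21 c₀ cm β₁ β₂)) (tsum_congr fun v => ?_))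
  by_cases h : C21 v
  · rw [if_pos h]; exact Set.indicator_of_mem (show v ∈ {v : T4 | C21 v} from h) _
  · rw [if_neg h]; exact Set.indicator_of_notMem (show v ∉ {v : T4 | C21 v} from h) _

lemma zeta1_eq :
    zetaS {(1,1)} (fun _ => c₀) = ∑' n : ℕ, (if 0 < n then cp n c₀ else 0) := by
  rw [zetaS, ← Equiv.tsum_eq e1]
  have key : ∀ a : {n : ℕ // 0 < n},
      wt {(1,1)} (fun _ => c₀) ((e1 a).1) = cp a.1 c₀ := by
    intro a
    rw [show ((e1 a).1 : Box → ℕ) = fill1 a.1 from rfl, wt1_eq]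
  refine Eq.trans (tsum_congr key) (Eq.trans
    (tsum_subtype {n : ℕ | 0 < n} (fun n => cp n c₀)) (tsum_congr fun n => ?_))
  by_cases h : 0 < n
  · rw [if_pos h]; exact Set.indicator_of_mem (show n ∈ {n : ℕ | 0 < n} from h) _
  · rw [if_neg h]; exact Set.indicator_of_notMem (show n ∉ {n : ℕ | 0 < n} from h) _

end

end GA

/-- Example 1.4 of the paper: the `2 × 2` Giambelli determinant identity for the
winged shape `θ = {(1,4),(2,4),(3,3),(3,4),(4,1),(4,2),(4,3),(4,4)}` with filling
`(α₂; α₁; c₀, c₁; β₂, β₁, c₋₁, c₀)`: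
`ζ_θ(s) = ζ_{θ₁₁}(s₁₁) ζ_{(1)}(c₀) - ζ_{θ₁₂}(s₁₂) ζ_{θ₂₁}(s₂₁)`. -/
theorem example_laced_giambelli (α₂ α₁ c₁ c₀ cm β₁ β₂ : ℂ)
    (hα₂ : 1 ≤ α₂.re) (hα₁ : 1 ≤ α₁.re) (hβ₁ : 1 ≤ β₁.re) (hβ₂ : 1 ≤ β₂.re)
    (hc₁ : 1 < c₁.re) (hc₀ : 1 < c₀.re) (hcm : 1 < cm.re) :
    zetaS ({(1,4),(2,4),(3,3),(3,4),(4,1),(4,2),(4,3),(4,4)} : Finset Box)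
        (fun x =>
          if x = (1,4) then α₂ else if x = (2,4) then α₁
          else if x = (3,3) then c₀ else if x = (3,4) then c₁
          else if x = (4,1) then β₂ else if x = (4,2) then β₁
          else if x = (4,3) then cm else if x = (4,4) then c₀ else 1) =
      zetaS ({(1,4),(2,4),(3,3),(3,4),(4,1),(4,2),(4,3)} : Finset Box)
          (fun x =>
            if x = (1,4) then α₂ else if x = (2,4) then α₁
            else if x = (3,3) then c₀ else if x = (3,4) then c₁
            else if x = (4,1) then β₂ else if x = (4,2) then β₁
            else if x = (4,3) then cm else 1) *
        zetaS ({(1,1)} : Finset Box) (fun _ => c₀) -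
      zetaS ({(1,2),(2,2),(3,1),(3,2)} : Finset Box)
          (fun x =>
            if x = (1,2) then α₂ else if x = (2,2) then α₁
            else if x = (3,1) then c₀ else if x = (3,2) then c₁ else 1) *
        zetaS ({(1,3),(2,1),(2,2),(2,3)} : Finset Box)
          (fun x =>
            if x = (1,3) then c₀ else if x = (2,1) then β₂
            else if x = (2,2) then β₁ else if x = (2,3) then cm else 1) := by
  have hmin : 1 < min (min c₀.re c₁.re) cm.re := lt_min (lt_min hc₀ hc₁) hcm
  set ε := (min (min c₀.re c₁.re) cm.re - 1) / 4 with hεdef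
  have hε0 : 0 < ε := by rw [hεdef]; linarith
  have hε : 0 ≤ ε := le_of_lt hε0
  have hm₀ : min (min c₀.re c₁.re) cm.re ≤ c₀.re :=
    le_trans (min_le_left _ _) (min_le_left _ _)
  have hm₁ : min (min c₀.re c₁.re) cm.re ≤ c₁.re :=
    le_trans (min_le_left _ _) (min_le_right _ _)
  have hmm : min (min c₀.re c₁.re) cm.re ≤ cm.re := min_le_right _ _
  have h4c₀ : 1 + 4*ε ≤ c₀.re := by rw [hεdef]; linarith
  have h4c₁ : 1 + 4*ε ≤ c₁.re := by rw [hεdef]; linarith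
  have h4cm : 1 + 4*ε ≤ cm.re := by rw [hεdef]; linarith
  -- summability in norm of the four factors
  have nF7 : Summable (fun v : GA.T7 =>
      ‖(if GA.C7 v then GA.W7 α₂ α₁ c₁ c₀ cm β₁ β₂ v else 0 : ℂ)‖) :=
    GA.summable_ind (GA.G7_summable hε0) (GA.G7_nonneg ε)
      (GA.W7_bound α₂ α₁ c₁ c₀ cm β₁ β₂ ε hα₂ hα₁ hβ₂ hβ₁ (by linarith) h4c₁ h4cm hε)
  have nF1 : Summable (fun n : ℕ => ‖(if 0 < n then GA.cp n c₀ else 0 : ℂ)‖) :=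
    GA.summable_ind (GA.g_summable hε0) (GA.g_nonneg ε)
      (fun n hn => by rw [GA.cp_norm hn, GA.g]; exact GA.bound2 hn (by linarith))
  have nF12 : Summable (fun v : GA.T4 =>
      ‖(if GA.C12 v then GA.W12 α₂ α₁ c₁ c₀ v else 0 : ℂ)‖) :=
    GA.summable_ind (GA.G4_summable hε0) (GA.G4_nonneg ε)
      (GA.W12_bound α₂ α₁ c₁ c₀ ε hα₂ hα₁ h4c₀ h4c₁ hε)
  have nF21 : Summable (fun v : GA.T4 =>
      ‖(if GA.C21 v then GA.W21 c₀ cm β₁ β₂ v else 0 : ℂ)‖) :=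
    GA.summable_ind (GA.G4_summable hε0) (GA.G4_nonneg ε)
      (GA.W21_bound c₀ cm β₁ β₂ ε hβ₂ hβ₁ h4c₀ h4cm hε)
  -- summability of the pieces over T8
  have bfull : ∀ v : GA.T8, GA.C7 v.1 → 0 < v.2 →
      ‖GA.W8 α₂ α₁ c₁ c₀ cm β₁ β₂ v‖ ≤ GA.G8 ε v :=
    GA.W8_bound_full α₂ α₁ c₁ c₀ cm β₁ β₂ ε hα₂ hα₁ hβ₂ hβ₁ h4c₀ h4c₁ h4cm hε
  have bpair : ∀ v : GA.T8, GA.Cpair v →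
      ‖GA.W8 α₂ α₁ c₁ c₀ cm β₁ β₂ v‖ ≤ GA.G8 ε v :=
    GA.W8_bound_pair α₂ α₁ c₁ c₀ cm β₁ β₂ ε hα₂ hα₁ hβ₂ hβ₁ h4c₀ h4c₁ h4cm hε
  have sθ : Summable (fun v : GA.T8 =>
      (if GA.C8 v then GA.W8 α₂ α₁ c₁ c₀ cm β₁ β₂ v else 0 : ℂ)) :=
    (GA.summable_ind (GA.G8_summable hε0) (GA.G8_nonneg ε) (fun v hv => bfull v hv.1
      (Nat.lt_of_lt_of_le (Nat.lt_of_le_of_lt (Nat.zero_le _) hv.1.2.2.2.2.2.1)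
        hv.2.1))).of_norm
  have sbad : Summable (fun v : GA.T8 =>
      (if GA.Cbad v then GA.W8 α₂ α₁ c₁ c₀ cm β₁ β₂ v else 0 : ℂ)) :=
    (GA.summable_ind (GA.G8_summable hε0) (GA.G8_nonneg ε)
      (fun v hv => bfull v hv.1 hv.2.1)).of_norm
  have sbadle : Summable (fun v : GA.T8 =>
      (if GA.Cbadle v then GA.W8 α₂ α₁ c₁ c₀ cm β₁ β₂ v else 0 : ℂ)) :=
    (GA.summable_ind (GA.G8_summable hε0) (GA.G8_nonneg ε)
      (fun v hv => bfull v hv.1.1 hv.1.2.1)).of_norm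
  have sbadgt : Summable (fun v : GA.T8 =>
      (if GA.Cbadgt v then GA.W8 α₂ α₁ c₁ c₀ cm β₁ β₂ v else 0 : ℂ)) :=
    (GA.summable_ind (GA.G8_summable hε0) (GA.G8_nonneg ε)
      (fun v hv => bfull v hv.1.1 hv.1.2.1)).of_norm
  have spairle : Summable (fun v : GA.T8 =>
      (if GA.Cpairle v then GA.W8 α₂ α₁ c₁ c₀ cm β₁ β₂ v else 0 : ℂ)) :=
    (GA.summable_ind (GA.G8_summable hε0) (GA.G8_nonneg ε)
      (fun v hv => bpair v hv.1)).of_norm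
  have spairgt : Summable (fun v : GA.T8 =>
      (if GA.Cpairgt v then GA.W8 α₂ α₁ c₁ c₀ cm β₁ β₂ v else 0 : ℂ)) :=
    (GA.summable_ind (GA.G8_summable hε0) (GA.G8_nonneg ε)
      (fun v hv => bpair v hv.1)).of_norm
  -- the two products as T8-sums
  have Q1 : ∑' (p : GA.T7 × ℕ),
      (if GA.C7 p.1 then GA.W7 α₂ α₁ c₁ c₀ cm β₁ β₂ p.1 else 0) *
        (if 0 < p.2 then GA.cp p.2 c₀ else 0) =
      ∑' v : GA.T8, (if GA.C7 v.1 ∧ 0 < v.2 then GA.W8 α₂ α₁ c₁ c₀ cm β₁ β₂ v else 0) := by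
    refine tsum_congr fun v => ?_
    obtain ⟨⟨a2,a1,x,y,b2,b1,z⟩,w⟩ := v
    by_cases h1 : GA.C7 (a2,a1,x,y,b2,b1,z) <;> by_cases h2 : 0 < w <;>
      simp [h1, h2, GA.W8]
  have Q2 : ∑' (p : GA.T4 × GA.T4),
      (if GA.C12 p.1 then GA.W12 α₂ α₁ c₁ c₀ p.1 else 0) *
        (if GA.C21 p.2 then GA.W21 c₀ cm β₁ β₂ p.2 else 0) =
      ∑' v : GA.T8, (if GA.Cpair v then GA.W8 α₂ α₁ c₁ c₀ cm β₁ β₂ v else 0) := by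
    rw [← Equiv.tsum_eq GA.eP]
    refine tsum_congr fun v => ?_
    obtain ⟨⟨a2,a1,x,y,b2,b1,z⟩,w⟩ := v
    show (if GA.C12 (a2,a1,x,y) then GA.W12 α₂ α₁ c₁ c₀ (a2,a1,x,y) else 0) *
        (if GA.C21 (w,b2,b1,z) then GA.W21 c₀ cm β₁ β₂ (w,b2,b1,z) else 0) =
      (if GA.Cpair ((a2,a1,x,y,b2,b1,z),w) then
        GA.W8 α₂ α₁ c₁ c₀ cm β₁ β₂ ((a2,a1,x,y,b2,b1,z),w) else 0)
    have hiff : (GA.C12 (a2,a1,x,y) ∧ GA.C21 (w,b2,b1,z)) ↔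
        GA.Cpair ((a2,a1,x,y,b2,b1,z),w) := by
      simp only [GA.C12, GA.C21, GA.Cpair]; omega
    by_cases h1 : GA.C12 (a2,a1,x,y)
    · by_cases h2 : GA.C21 (w,b2,b1,z)
      · rw [if_pos h1, if_pos h2, if_pos (hiff.mp ⟨h1,h2⟩)]
        simp only [GA.W12, GA.W21, GA.W8, GA.W7]; ring
      · rw [if_pos h1, if_neg h2, if_neg (fun hc => h2 (hiff.mpr hc).2), mul_zero]
    · rw [if_neg h1, if_neg (fun hc => h1 (hiff.mpr hc).1), zero_mul]
  have hP1 : (∑' v : GA.T7, (if GA.C7 v then GA.W7 α₂ α₁ c₁ c₀ cm β₁ β₂ v else 0)) *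
      (∑' n : ℕ, (if 0 < n then GA.cp n c₀ else 0)) =
      ∑' v : GA.T8, (if GA.C7 v.1 ∧ 0 < v.2 then GA.W8 α₂ α₁ c₁ c₀ cm β₁ β₂ v else 0) :=
    (tsum_mul_tsum_of_summable_norm nF7 nF1).trans Q1
  have hP2 : (∑' v : GA.T4, (if GA.C12 v then GA.W12 α₂ α₁ c₁ c₀ v else 0)) *
      (∑' v : GA.T4, (if GA.C21 v then GA.W21 c₀ cm β₁ β₂ v else 0)) =
      ∑' v : GA.T8, (if GA.Cpair v then GA.W8 α₂ α₁ c₁ c₀ cm β₁ β₂ v else 0) :=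
    (tsum_mul_tsum_of_summable_norm nF12 nF21).trans Q2
  -- splitting identities
  have S1 : ∑' v : GA.T8, (if GA.C7 v.1 ∧ 0 < v.2 then GA.W8 α₂ α₁ c₁ c₀ cm β₁ β₂ v else 0) =
      (∑' v : GA.T8, (if GA.C8 v then GA.W8 α₂ α₁ c₁ c₀ cm β₁ β₂ v else 0)) +
      (∑' v : GA.T8, (if GA.Cbad v then GA.W8 α₂ α₁ c₁ c₀ cm β₁ β₂ v else 0)) := by
    rw [← Summable.tsum_add sθ sbad]
    refine tsum_congr fun v => ?_
    obtain ⟨⟨a2,a1,x,y,b2,b1,z⟩,w⟩ := v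
    simp only [GA.C7, GA.C8, GA.Cbad]
    split_ifs <;> first | ring1 | (exfalso; omega)
  have S2 : ∑' v : GA.T8, (if GA.Cbad v then GA.W8 α₂ α₁ c₁ c₀ cm β₁ β₂ v else 0) =
      (∑' v : GA.T8, (if GA.Cbadle v then GA.W8 α₂ α₁ c₁ c₀ cm β₁ β₂ v else 0)) +
      (∑' v : GA.T8, (if GA.Cbadgt v then GA.W8 α₂ α₁ c₁ c₀ cm β₁ β₂ v else 0)) := by
    rw [← Summable.tsum_add sbadle sbadgt]
    refine tsum_congr fun v => ?_
    obtain ⟨⟨a2,a1,x,y,b2,b1,z⟩,w⟩ := v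
    simp only [GA.C7, GA.Cbad, GA.Cbadle, GA.Cbadgt]
    split_ifs <;> first | ring1 | (exfalso; omega)
  have S3 : ∑' v : GA.T8, (if GA.Cpair v then GA.W8 α₂ α₁ c₁ c₀ cm β₁ β₂ v else 0) =
      (∑' v : GA.T8, (if GA.Cpairle v then GA.W8 α₂ α₁ c₁ c₀ cm β₁ β₂ v else 0)) +
      (∑' v : GA.T8, (if GA.Cpairgt v then GA.W8 α₂ α₁ c₁ c₀ cm β₁ β₂ v else 0)) := by
    rw [← Summable.tsum_add spairle spairgt]
    refine tsum_congr fun v => ?_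
    obtain ⟨⟨a2,a1,x,y,b2,b1,z⟩,w⟩ := v
    simp only [GA.Cpair, GA.Cpairle, GA.Cpairgt]
    split_ifs <;> first | ring1 | (exfalso; omega)
  have S4 : ∑' v : GA.T8, (if GA.Cbadgt v then GA.W8 α₂ α₁ c₁ c₀ cm β₁ β₂ v else 0) =
      ∑' v : GA.T8, (if GA.Cpairgt v then GA.W8 α₂ α₁ c₁ c₀ cm β₁ β₂ v else 0) := by
    refine tsum_congr fun v => ?_
    obtain ⟨⟨a2,a1,x,y,b2,b1,z⟩,w⟩ := v
    refine if_congr ?_ rfl rfl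
    simp only [GA.C7, GA.Cbad, GA.Cbadgt, GA.Cpair, GA.Cpairgt]
    omega
  have S5 : ∑' v : GA.T8, (if GA.Cbadle v then GA.W8 α₂ α₁ c₁ c₀ cm β₁ β₂ v else 0) =
      ∑' v : GA.T8, (if GA.Cpairle v then GA.W8 α₂ α₁ c₁ c₀ cm β₁ β₂ v else 0) := by
    rw [← Equiv.tsum_eq GA.swapE
      (fun v => (if GA.Cpairle v then GA.W8 α₂ α₁ c₁ c₀ cm β₁ β₂ v else 0))]
    refine tsum_congr fun v => ?_
    obtain ⟨⟨a2,a1,x,y,b2,b1,z⟩,w⟩ := v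
    show (if GA.Cbadle ((a2,a1,x,y,b2,b1,z),w) then
        GA.W8 α₂ α₁ c₁ c₀ cm β₁ β₂ ((a2,a1,x,y,b2,b1,z),w) else 0) =
      (if GA.Cpairle ((a2,a1,w,y,b2,b1,z),x) then
        GA.W8 α₂ α₁ c₁ c₀ cm β₁ β₂ ((a2,a1,w,y,b2,b1,z),x) else 0)
    have hiff : GA.Cbadle ((a2,a1,x,y,b2,b1,z),w) ↔ GA.Cpairle ((a2,a1,w,y,b2,b1,z),x) := by
      simp only [GA.C7, GA.Cbad, GA.Cbadle, GA.Cpair, GA.Cpairle]; omega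
    by_cases hb : GA.Cbadle ((a2,a1,x,y,b2,b1,z),w)
    · rw [if_pos hb, if_pos (hiff.mp hb)]
      simp only [GA.W8, GA.W7]; ring
    · rw [if_neg hb, if_neg (fun hc => hb (hiff.mpr hc))]
  rw [GA.zeta8_eq α₂ α₁ c₁ c₀ cm β₁ β₂, GA.zeta7_eq α₂ α₁ c₁ c₀ cm β₁ β₂,
    GA.zeta1_eq c₀, GA.zeta12_eq α₂ α₁ c₁ c₀, GA.zeta21_eq c₀ cm β₁ β₂,
    hP1, hP2, S1, S2, S3, S4, S5]
  ring
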